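/- Let p ∈ frontier Z be a simple nondegenerate point with associated neighborhood U_p. Suppose there exist a compact set K ⊆ U_p that is a neighborhood of p and ρ > 0 such that α^K is Lebesgue integrable on (0, ρ). Then there exist an open neighborhood U of p, ρ' > 0, and a function a : ℝ → ℝ that is continuous and strictly positive on (0, ρ'] with t ↦ (a t)⁻¹ Lebesgue integrable on (0, ρ'), such that ‖∇f x‖ ≥ a (f x) for every x ∈ U with 0 < f x ≤ ρ'. -/

import Mathlib

open Set MeasureTheory Metric
open scoped ENNReal

variable {n : ℕ}

noncomputable def alphaK (f : EuclideanSpace ℝ (Fin n) → ℝ)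
    (K : Set (EuclideanSpace ℝ (Fin n))) (t : ℝ) : ℝ :=
  sSup {y : ℝ | ∃ x ∈ K, f x = t ∧ y = ‖gradient f x‖⁻¹}

lemma geom_aux : ∀ N : ℕ, ∑ j ∈ Finset.range N, (2:ℝ≥0∞)^(j+2) ≤ 2^(N+2) := by
  intro N
  induction N with
  | zero => simp
  | succ N ih =>
    rw [Finset.sum_range_succ]
    calc ∑ j ∈ Finset.range N, (2:ℝ≥0∞)^(j+2) + 2^(N+2) ≤ 2^(N+2) + 2^(N+2) := by
          exact add_le_add_left ih _
      _ = 2^(N+3) := by ring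
      _ ≤ 2^(N+1+2) := le_refl _

lemma hJx_aux : ∀ x : ℝ, 1 ≤ x → ∃ J : ℕ, (2:ℝ)^J ≤ x ∧ x < 2^(J+1) := by
  intro x hx
  have hex : ∃ n:ℕ, x < 2^(n+1) := by
    obtain ⟨n, hn⟩ := pow_unbounded_of_one_lt x one_lt_two
    exact ⟨n, hn.trans_le (pow_le_pow_right₀ one_le_two (Nat.le_succ n))⟩
  classical
  refine ⟨Nat.find hex, ?_, Nat.find_spec hex⟩
  rcases Nat.eq_zero_or_pos (Nat.find hex) with h0 | hpos
  · rw [h0]; simpa using hx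
  · have h1 := Nat.find_min hex (Nat.pred_lt hpos.ne')
    have h2 : (Nat.find hex).pred + 1 = Nat.find hex := Nat.succ_pred_eq_of_pos hpos
    rw [h2] at h1
    exact not_lt.1 h1

lemma core_exists_a (m : ℝ → ℝ) (ρ' : ℝ) (hρ' : 0 < ρ')
    (hm0 : ∀ t, 0 ≤ m t) (hm1 : ∀ t, m t ≤ 1) (hm00 : m 0 = 0)
    (hmpos : ∀ t : ℝ, 0 < t → 0 < m t)
    (hlsc : LowerSemicontinuous m)
    (hI : ∫⁻ t in Ioo (0:ℝ) ρ', ENNReal.ofReal (m t)⁻¹ ≠ ∞) :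
    ∃ a : ℝ → ℝ, ContinuousOn a (Ioc 0 ρ') ∧ (∀ t ∈ Ioc (0:ℝ) ρ', 0 < a t) ∧
      IntegrableOn (fun t => (a t)⁻¹) (Ioo 0 ρ') ∧ ∀ t ∈ Ioc (0:ℝ) ρ', a t ≤ m t := by
  classical
  set c : ℕ → ℝ := fun j => ((2:ℝ)^j)⁻¹ with hc_def
  have hc_pos : ∀ j, 0 < c j := fun j => by positivity
  have hc_anti : ∀ {i j : ℕ}, i ≤ j → c j ≤ c i := by
    intro i j hij
    exact inv_anti₀ (by positivity) (pow_le_pow_right₀ one_le_two hij)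
  have hc_lt : ∀ ε : ℝ, 0 < ε → ∃ J : ℕ, c J < ε := by
    intro ε hε
    obtain ⟨n, hn⟩ := pow_unbounded_of_one_lt ε⁻¹ one_lt_two
    refine ⟨n, ?_⟩
    rw [hc_def]
    calc ((2:ℝ)^n)⁻¹ < (ε⁻¹)⁻¹ := by
          apply inv_strictAnti₀ (by positivity) hn
      _ = ε := inv_inv ε
  set C : ℕ → Set ℝ := fun j => {t | m t ≤ c j} ∩ Icc 0 ρ' with hC_def
  have hC_closed : ∀ j, IsClosed (C j) :=
    fun j => (hlsc.isClosed_preimage (c j)).inter isClosed_Icc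
  have h0C : ∀ j, (0:ℝ) ∈ C j := fun j => ⟨by simp [hm00, (hc_pos j).le], le_refl 0, hρ'.le⟩
  have hCsub : ∀ j, C j ⊆ Icc 0 ρ' := fun j => inter_subset_right
  have hCmeas : ∀ j, MeasurableSet (C j) := fun j => (hC_closed j).measurableSet
  have hCfin : ∀ j, volume (C j) ≠ ∞ := by
    intro j
    exact ne_top_of_le_ne_top (by simp) (measure_mono (hCsub j))
  have hthick_fin : ∀ j, volume (Metric.thickening 1 (C j)) ≠ ∞ := by
    intro j
    have hsub : Metric.thickening 1 (C j) ⊆ Ioo (-1) (ρ' + 1) := by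
      intro s hs
      rcases Metric.mem_thickening_iff.1 hs with ⟨z, hz, hd⟩
      have hz' := hCsub j hz
      rw [Real.dist_eq] at hd
      rcases abs_lt.1 hd with ⟨h1, h2⟩
      exact ⟨by linarith [hz'.1], by linarith [hz'.2]⟩
    exact ne_top_of_le_ne_top (by simp) (measure_mono hsub)
  have hr : ∀ j : ℕ, ∃ rr : ℝ, 0 < rr ∧ rr ≤ c j ∧
      volume (Metric.thickening rr (C j)) ≤ volume (C j) + ((4:ℝ≥0∞)^j)⁻¹ := by
    intro j
    have htend := tendsto_measure_thickening_of_isClosed ⟨1, one_pos, hthick_fin j⟩ (hC_closed j)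
    have hlt : volume (C j) < volume (C j) + ((4:ℝ≥0∞)^j)⁻¹ :=
      ENNReal.lt_add_right (hCfin j) (by simp)
    have hev := htend.eventually_lt_const hlt
    have hev2 : Ioo (0:ℝ) (c j) ∈ nhdsWithin 0 (Ioi 0) :=
      Ioo_mem_nhdsGT_of_mem ⟨le_refl 0, hc_pos j⟩
    obtain ⟨rr, h1, h2⟩ := (hev.and hev2).exists
    exact ⟨rr, h2.1, h2.2.le, h1.le⟩
  choose r hr_pos hr_le hr_meas using hr
  set φ : ℕ → ℝ → ℝ := fun j s => max 0 (1 - Metric.infDist s (C j) / r j) with hφ_def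
  have hφnn : ∀ j s, 0 ≤ φ j s := fun j s => le_max_left _ _
  have hφ1 : ∀ j s, φ j s ≤ 1 := by
    intro j s
    apply max_le (by norm_num)
    have h1 : 0 ≤ Metric.infDist s (C j) / r j :=
      div_nonneg Metric.infDist_nonneg (hr_pos j).le
    linarith
  have hφcont : ∀ j, Continuous (φ j) := by
    intro j
    exact continuous_const.max
      (continuous_const.sub ((Metric.continuous_infDist_pt (C j)).div_const _))
  have hφ_one : ∀ j s, s ∈ C j → φ j s = 1 := by
    intro j s hs
    rw [hφ_def]
    simp [Metric.infDist_zero_of_mem hs]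
  have hφ_zero : ∀ j s, r j ≤ Metric.infDist s (C j) → φ j s = 0 := by
    intro j s hs
    rw [hφ_def]
    simp only [max_eq_left_iff]
    have : (1:ℝ) ≤ Metric.infDist s (C j) / r j := (one_le_div (hr_pos j)).2 hs
    linarith
  have hφ_supp : ∀ j s, φ j s ≠ 0 → s ∈ Metric.thickening (r j) (C j) := by
    intro j s hsn
    by_contra hmem
    apply hsn
    apply hφ_zero
    by_contra hlt
    push_neg at hlt
    exact hmem ((Metric.mem_thickening_iff_infDist_lt ⟨0, h0C j⟩).2 hlt)
  set ψ : ℕ → ℝ → ℝ := fun j s => (2:ℝ)^(j+2) * φ j s with hψ_def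
  have hψnn : ∀ j s, 0 ≤ ψ j s := fun j s => mul_nonneg (by positivity) (hφnn j s)
  set h : ℝ → ℝ := fun s => 1 + ∑' j, ψ j s with hh_def
  -- local vanishing
  have LOC : ∀ t ∈ Ioc (0:ℝ) ρ', ∃ δ > (0:ℝ), ∃ J : ℕ,
      ∀ s, dist s t < δ → ∀ j, J ≤ j → φ j s = 0 := by
    intro t ht
    have hmt := hmpos t ht.1
    obtain ⟨J₁, hJ₁⟩ := hc_lt (m t) hmt
    obtain ⟨δ₁, hδ₁pos, hball⟩ : ∃ δ₁ > (0:ℝ), ∀ s, dist s t < δ₁ → c J₁ < m s := by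
      have hev := hlsc t (c J₁) hJ₁
      rcases Metric.eventually_nhds_iff.1 hev with ⟨δ₁, hp, hq⟩
      exact ⟨δ₁, hp, fun s hs => hq hs⟩
    obtain ⟨J₂, hJ₂⟩ := hc_lt (δ₁/2) (by linarith)
    refine ⟨δ₁/2, by linarith, max J₁ J₂, ?_⟩
    intro s hs j hj
    apply hφ_zero
    by_contra hlt
    push_neg at hlt
    have hmem := (Metric.mem_thickening_iff_infDist_lt ⟨0, h0C j⟩).2 hlt
    rcases Metric.mem_thickening_iff.1 hmem with ⟨z, hzC, hdz⟩
    have hz1 : m z ≤ c J₁ := le_trans hzC.1 (hc_anti (le_trans (le_max_left _ _) hj))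
    have hrj : r j ≤ c J₂ := le_trans (hr_le j) (hc_anti (le_trans (le_max_right _ _) hj))
    have hdz2 : dist z t < δ₁ := by
      calc dist z t ≤ dist z s + dist s t := dist_triangle _ _ _
        _ < c J₂ + δ₁/2 := by
            have := dist_comm z s ▸ hdz
            exact add_lt_add_of_lt_of_lt (lt_of_lt_of_le (dist_comm s z ▸ hdz) hrj) hs
        _ < δ₁ := by linarith
    exact absurd (hball z hdz2) (not_lt.2 hz1)
  have hsummable : ∀ t ∈ Ioc (0:ℝ) ρ', Summable (fun j => ψ j t) := by
    intro t ht
    obtain ⟨δ, hδ, J, hJ⟩ := LOC t ht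
    apply summable_of_ne_finset_zero (s := Finset.range J)
    intro j hj
    have hj' : J ≤ j := by simpa using hj
    have := hJ t (by simpa [dist_self] using hδ) j hj'
    simp [hψ_def, this]
  have hcontOn : ContinuousOn h (Ioc 0 ρ') := by
    intro t ht
    obtain ⟨δ, hδ, J, hJ⟩ := LOC t ht
    have hc2 : ContinuousAt (fun s => 1 + ∑ j ∈ Finset.range J, ψ j s) t := by
      apply Continuous.continuousAt
      apply continuous_const.add
      apply continuous_finset_sum
      intro j _
      exact continuous_const.mul (hφcont j)
    have hev : (fun s => 1 + ∑ j ∈ Finset.range J, ψ j s) =ᶠ[nhds t] h := by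
      rw [Filter.eventuallyEq_iff_exists_mem]
      refine ⟨Metric.ball t δ, Metric.ball_mem_nhds t hδ, ?_⟩
      intro s hs
      have : ∑' j, ψ j s = ∑ j ∈ Finset.range J, ψ j s := by
        apply tsum_eq_sum
        intro j hj
        have hj' : J ≤ j := by simpa using hj
        simp [hψ_def, hJ s (Metric.mem_ball.1 hs) j hj']
      simp only [hh_def, this]
    exact (hc2.congr hev).continuousWithinAt
  have h_one : ∀ t, 1 ≤ h t := fun t =>
    le_add_of_nonneg_right (tsum_nonneg (fun j => hψnn j t))
  have hpos_h : ∀ t ∈ Ioc (0:ℝ) ρ', 0 < h t := fun t _ => lt_of_lt_of_le one_pos (h_one t)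
  have hmemC_iff : ∀ j t, t ∈ Ioc (0:ℝ) ρ' → (t ∈ C j ↔ (2:ℝ)^j ≤ (m t)⁻¹) := by
    intro j t ht
    have hmt := hmpos t ht.1
    constructor
    · intro hC
      have h1 : m t ≤ ((2:ℝ)^j)⁻¹ := hC.1
      calc (2:ℝ)^j = (((2:ℝ)^j)⁻¹)⁻¹ := (inv_inv _).symm
        _ ≤ (m t)⁻¹ := inv_anti₀ hmt h1
    · intro hle
      refine ⟨?_, ⟨ht.1.le, ht.2⟩⟩
      show m t ≤ ((2:ℝ)^j)⁻¹
      calc m t = ((m t)⁻¹)⁻¹ := (inv_inv _).symm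
        _ ≤ ((2:ℝ)^j)⁻¹ := inv_anti₀ (by positivity) hle
  have h_ge : ∀ t ∈ Ioc (0:ℝ) ρ', (m t)⁻¹ ≤ h t := by
    intro t ht
    have hmt := hmpos t ht.1
    have hx : 1 ≤ (m t)⁻¹ := (one_le_inv₀ hmt).2 (hm1 t)
    obtain ⟨J, hJ1, hJ2⟩ := hJx_aux _ hx
    have htC : t ∈ C J := (hmemC_iff J t ht).2 hJ1
    have hψJ : ψ J t = 2^(J+2) := by
      rw [hψ_def]; simp [hφ_one J t htC]
    have hle := Summable.le_tsum (hsummable t ht) J (fun j _ => hψnn j t)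
    have : (m t)⁻¹ < h t := by
      calc (m t)⁻¹ < 2^(J+1) := hJ2
        _ ≤ (2:ℝ)^(J+2) := by
            apply pow_le_pow_right₀ one_le_two
            omega
        _ = ψ J t := hψJ.symm
        _ ≤ ∑' j, ψ j t := hle
        _ ≤ h t := le_add_of_nonneg_left one_pos.le
    exact this.le
  -- ENNReal side
  set T : ℕ → Set ℝ := fun j => Metric.thickening (r j) (C j) with hT_def
  have hTmeas : ∀ j, MeasurableSet (T j) := fun j => Metric.isOpen_thickening.measurableSet
  have hcast : ∀ k:ℕ, ENNReal.ofReal ((2:ℝ)^k) = (2:ℝ≥0∞)^k := by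
    intro k
    rw [ENNReal.ofReal_pow (by norm_num)]
    norm_num
  set H : ℝ → ℝ≥0∞ := fun t => 1 + ∑' j, (2:ℝ≥0∞)^(j+2) * (T j).indicator 1 t with hH_def
  have hptwise : ∀ t ∈ Ioo (0:ℝ) ρ', ENNReal.ofReal (h t) ≤ H t := by
    intro t ht
    have hsum := hsummable t (Ioo_subset_Ioc_self ht)
    rw [hh_def]
    simp only []
    rw [ENNReal.ofReal_add (by norm_num) (tsum_nonneg (fun j => hψnn j t)),
      ENNReal.ofReal_one, ENNReal.ofReal_tsum_of_nonneg (fun j => hψnn j t) hsum]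
    rw [hH_def]
    apply add_le_add_right
    apply ENNReal.tsum_le_tsum
    intro j
    by_cases hmem : t ∈ T j
    · simp only [indicator_of_mem hmem, Pi.one_apply, mul_one]
      calc ENNReal.ofReal (ψ j t) ≤ ENNReal.ofReal ((2:ℝ)^(j+2)) := by
            apply ENNReal.ofReal_le_ofReal
            rw [hψ_def]
            calc (2:ℝ)^(j+2) * φ j t ≤ (2:ℝ)^(j+2) * 1 :=
                  mul_le_mul_of_nonneg_left (hφ1 j t) (by positivity)
              _ = (2:ℝ)^(j+2) := mul_one _
        _ = (2:ℝ≥0∞)^(j+2) := hcast _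
    · have hz : φ j t = 0 := by
        by_contra hne
        exact hmem (hφ_supp j t hne)
      simp [hψ_def, hz, indicator_of_notMem hmem]
  have hHfin : ∫⁻ t in Ioo (0:ℝ) ρ', H t < ∞ := by
    have hHsplit : ∫⁻ t in Ioo (0:ℝ) ρ', H t =
        volume (Ioo (0:ℝ) ρ') + ∫⁻ t in Ioo (0:ℝ) ρ', ∑' j, (2:ℝ≥0∞)^(j+2) * (T j).indicator 1 t := by
      rw [hH_def]
      rw [lintegral_add_left measurable_const]
      simp
    rw [hHsplit]
    have hmeas_term : ∀ j, Measurable (fun t => (2:ℝ≥0∞)^(j+2) * (T j).indicator 1 t) :=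
      fun j => (measurable_one.indicator (hTmeas j)).const_mul _
    rw [lintegral_tsum (fun j => (hmeas_term j).aemeasurable)]
    have hterm : ∀ j, ∫⁻ t in Ioo (0:ℝ) ρ', (2:ℝ≥0∞)^(j+2) * (T j).indicator 1 t
        ≤ (2:ℝ≥0∞)^(j+2) * (volume (C j) + ((4:ℝ≥0∞)^j)⁻¹) := by
      intro j
      rw [lintegral_const_mul _ (measurable_one.indicator (hTmeas j))]
      apply mul_le_mul_right
      rw [lintegral_indicator (hTmeas j)]
      rw [Measure.restrict_restrict (hTmeas j)]
      simp only [Pi.one_apply, lintegral_one, Measure.restrict_apply MeasurableSet.univ, univ_inter]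
      calc volume (T j ∩ Ioo 0 ρ') ≤ volume (T j) := measure_mono inter_subset_left
        _ ≤ volume (C j) + ((4:ℝ≥0∞)^j)⁻¹ := hr_meas j
    calc volume (Ioo (0:ℝ) ρ') + ∑' j, ∫⁻ t in Ioo (0:ℝ) ρ', (2:ℝ≥0∞)^(j+2) * (T j).indicator 1 t
        ≤ volume (Ioo (0:ℝ) ρ') + ∑' j, (2:ℝ≥0∞)^(j+2) * (volume (C j) + ((4:ℝ≥0∞)^j)⁻¹) := by
          exact add_le_add_right (ENNReal.tsum_le_tsum hterm) _
      _ = volume (Ioo (0:ℝ) ρ') + (∑' j, (2:ℝ≥0∞)^(j+2) * volume (C j)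
            + ∑' j, (2:ℝ≥0∞)^(j+2) * ((4:ℝ≥0∞)^j)⁻¹) := by
          rw [← ENNReal.tsum_add]
          congr 1
          apply tsum_congr
          intro j
          rw [mul_add]
      _ < ∞ := by
          rw [ENNReal.add_lt_top, ENNReal.add_lt_top]
          refine ⟨Real.volume_Ioo ▸ ENNReal.ofReal_lt_top, ?_, ?_⟩
          · -- layer cake bound
            have hvolC : ∀ j, volume (C j) ≤ volume (C j ∩ Ioc 0 ρ') := by
              intro j
              have hsub2 : C j ⊆ (C j ∩ Ioc 0 ρ') ∪ {0} := by
                intro s hs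
                rcases eq_or_ne s 0 with rfl | hne
                · exact Or.inr rfl
                · exact Or.inl ⟨hs, lt_of_le_of_ne (hCsub j hs).1 (Ne.symm hne), (hCsub j hs).2⟩
              calc volume (C j) ≤ volume ((C j ∩ Ioc 0 ρ') ∪ {0}) := measure_mono hsub2
                _ ≤ volume (C j ∩ Ioc 0 ρ') + volume {0} := measure_union_le _ _
                _ = volume (C j ∩ Ioc 0 ρ') := by simp
            have hCind : ∀ j, volume (C j ∩ Ioc 0 ρ') = ∫⁻ t in Ioc (0:ℝ) ρ', (C j).indicator 1 t := by
              intro j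
              rw [lintegral_indicator (hCmeas j), Measure.restrict_restrict (hCmeas j)]
              simp only [Pi.one_apply, lintegral_one, Measure.restrict_apply MeasurableSet.univ, univ_inter]
            calc ∑' j, (2:ℝ≥0∞)^(j+2) * volume (C j)
                ≤ ∑' j, (2:ℝ≥0∞)^(j+2) * volume (C j ∩ Ioc 0 ρ') := by
                  apply ENNReal.tsum_le_tsum
                  intro j
                  exact mul_le_mul_right (hvolC j) _
              _ = ∑' j, ∫⁻ t in Ioc (0:ℝ) ρ', (2:ℝ≥0∞)^(j+2) * (C j).indicator 1 t := by
                  apply tsum_congr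
                  intro j
                  rw [lintegral_const_mul _ (measurable_one.indicator (hCmeas j)), ← hCind j]
              _ = ∫⁻ t in Ioc (0:ℝ) ρ', ∑' j, (2:ℝ≥0∞)^(j+2) * (C j).indicator 1 t := by
                  rw [lintegral_tsum
                    (fun j => ((measurable_one.indicator (hCmeas j)).const_mul _).aemeasurable)]
              _ ≤ ∫⁻ t in Ioc (0:ℝ) ρ', 8 * ENNReal.ofReal (m t)⁻¹ := by
                  apply lintegral_mono_ae
                  rw [ae_restrict_iff' measurableSet_Ioc]
                  apply ae_of_all
                  intro t ht
                  have hmt := hmpos t ht.1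
                  have hx : 1 ≤ (m t)⁻¹ := (one_le_inv₀ hmt).2 (hm1 t)
                  obtain ⟨J, hJ1, hJ2⟩ := hJx_aux _ hx
                  have htail : ∀ j ∉ Finset.range (J+1),
                      (2:ℝ≥0∞)^(j+2) * (C j).indicator 1 t = 0 := by
                    intro j hj
                    have hj' : J + 1 ≤ j := by simpa using hj
                    have hnC : t ∉ C j := by
                      intro hC
                      have h2j : (2:ℝ)^j ≤ (m t)⁻¹ := (hmemC_iff j t ht).1 hC
                      have : (m t)⁻¹ < (2:ℝ)^j :=
                        lt_of_lt_of_le hJ2 (pow_le_pow_right₀ one_le_two hj')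
                      linarith
                    simp [indicator_of_notMem hnC]
                  rw [tsum_eq_sum htail]
                  calc ∑ j ∈ Finset.range (J+1), (2:ℝ≥0∞)^(j+2) * (C j).indicator 1 t
                      ≤ ∑ j ∈ Finset.range (J+1), (2:ℝ≥0∞)^(j+2) := by
                        apply Finset.sum_le_sum
                        intro j _
                        calc (2:ℝ≥0∞)^(j+2) * (C j).indicator 1 t
                            ≤ (2:ℝ≥0∞)^(j+2) * 1 := by
                              apply mul_le_mul_right
                              by_cases ht' : t ∈ C j <;> simp [ht']
                          _ = (2:ℝ≥0∞)^(j+2) := mul_one _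
                    _ ≤ (2:ℝ≥0∞)^(J+3) := geom_aux (J+1)
                    _ = 8 * (2:ℝ≥0∞)^J := by rw [pow_add]; ring
                    _ ≤ 8 * ENNReal.ofReal (m t)⁻¹ := by
                        apply mul_le_mul_right
                        rw [← hcast J]
                        exact ENNReal.ofReal_le_ofReal hJ1
              _ = 8 * ∫⁻ t in Ioc (0:ℝ) ρ', ENNReal.ofReal (m t)⁻¹ := by
                  rw [lintegral_const_mul]
                  apply ENNReal.measurable_ofReal.comp
                  exact (hlsc.measurable.inv)
              _ = 8 * ∫⁻ t in Ioo (0:ℝ) ρ', ENNReal.ofReal (m t)⁻¹ := by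
                  rw [setLIntegral_congr (Ioo_ae_eq_Ioc (μ := volume) (a := (0:ℝ)) (b := ρ'))]
              _ < ∞ := ENNReal.mul_lt_top (by simp) (lt_top_iff_ne_top.2 hI)
          · -- geometric series
            have heq : ∀ j:ℕ, (2:ℝ≥0∞)^(j+2) * ((4:ℝ≥0∞)^j)⁻¹ = 4 * (2⁻¹:ℝ≥0∞)^j := by
              intro j
              have h4 : (4:ℝ≥0∞)^j = 2^j * 2^j := by
                rw [← mul_pow]; norm_num
              rw [h4, pow_add, ENNReal.mul_inv (by simp) (by simp), ENNReal.inv_pow]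
              calc (2:ℝ≥0∞)^j * 2^2 * ((2⁻¹:ℝ≥0∞)^j * (2⁻¹:ℝ≥0∞)^j)
                  = 2^2 * ((2:ℝ≥0∞)^j * (2⁻¹:ℝ≥0∞)^j) * (2⁻¹:ℝ≥0∞)^j := by ring
                _ = 4 * (2⁻¹:ℝ≥0∞)^j := by
                    rw [← ENNReal.inv_pow, ENNReal.mul_inv_cancel (by simp) (by simp)]
                    norm_num
            calc ∑' j, (2:ℝ≥0∞)^(j+2) * ((4:ℝ≥0∞)^j)⁻¹ = ∑' j, 4 * (2⁻¹:ℝ≥0∞)^j :=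
                  tsum_congr heq
              _ = 4 * ∑' j, (2⁻¹:ℝ≥0∞)^j := ENNReal.tsum_mul_left
              _ = 4 * (1 - 2⁻¹)⁻¹ := by rw [ENNReal.tsum_geometric]
              _ < ∞ := by
                  rw [ENNReal.one_sub_inv_two]
                  simp [ENNReal.mul_lt_top_iff]
  have hint_h : IntegrableOn h (Ioo 0 ρ') := by
    constructor
    · exact (hcontOn.mono Ioo_subset_Ioc_self).aestronglyMeasurable measurableSet_Ioo
    · have hb : ∫⁻ t in Ioo (0:ℝ) ρ', (‖h t‖₊ : ℝ≥0∞) ≤ ∫⁻ t in Ioo (0:ℝ) ρ', H t := by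
        apply lintegral_mono_ae
        rw [ae_restrict_iff' measurableSet_Ioo]
        apply ae_of_all
        intro t ht
        have hnn : (0:ℝ) ≤ h t := le_trans one_pos.le (h_one t)
        exact (Real.enorm_eq_ofReal hnn).le.trans (hptwise t ht)
      exact lt_of_le_of_lt hb hHfin
  refine ⟨fun t => (h t)⁻¹, ?_, ?_, ?_, ?_⟩
  · exact hcontOn.inv₀ (fun t ht => (hpos_h t ht).ne')
  · exact fun t ht => inv_pos.2 (hpos_h t ht)
  · exact hint_h.congr_fun (fun t _ => (inv_inv (h t)).symm) measurableSet_Ioo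
  · intro t ht
    have hmt := hmpos t ht.1
    calc (h t)⁻¹ ≤ ((m t)⁻¹)⁻¹ := inv_anti₀ (inv_pos.2 hmt) (h_ge t ht)
      _ = m t := inv_inv _

theorem alpha_integrable_implies_gradient_inequality (n : ℕ) (hn : 1 ≤ n)
    (f : EuclideanSpace ℝ (Fin n) → ℝ)
    (hf : Continuous f) (hf0 : ∀ x, 0 ≤ f x)
    (hZ : (f ⁻¹' {0}).Nonempty)
    (hC1 : ContDiffOn ℝ 1 f (f ⁻¹' {0})ᶜ)
    (p : EuclideanSpace ℝ (Fin n)) (hp : p ∈ frontier (f ⁻¹' {0}))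
    (Up : Set (EuclideanSpace ℝ (Fin n))) (hUp : IsOpen Up) (hpUp : p ∈ Up)
    (hsimple : ∀ x ∈ Up, f x ≠ 0 → gradient f x ≠ 0)
    (K : Set (EuclideanSpace ℝ (Fin n))) (hK : IsCompact K) (hKsub : K ⊆ Up)
    (hKnhds : K ∈ nhds p)
    (ρ : ℝ) (hρ : 0 < ρ) (hint : IntegrableOn (alphaK f K) (Ioo 0 ρ)) :
    ∃ U : Set (EuclideanSpace ℝ (Fin n)), IsOpen U ∧ p ∈ U ∧
      ∃ ρ' > (0:ℝ), ∃ a : ℝ → ℝ, ContinuousOn a (Ioc 0 ρ') ∧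
        (∀ t ∈ Ioc (0:ℝ) ρ', 0 < a t) ∧
        IntegrableOn (fun t => (a t)⁻¹) (Ioo 0 ρ') ∧
        ∀ x ∈ U, 0 < f x → f x ≤ ρ' → a (f x) ≤ ‖gradient f x‖ := by
  classical
  have hZclosed : IsClosed (f ⁻¹' {0}) := isClosed_singleton.preimage hf
  have hZcopen : IsOpen (f ⁻¹' {0})ᶜ := hZclosed.isOpen_compl
  have hfp : f p = 0 := by
    have h1 := frontier_subset_closure (s := f ⁻¹' {0}) hp
    rw [hZclosed.closure_eq] at h1
    exact h1
  have hpK : p ∈ K := mem_of_mem_nhds hKnhds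
  have hfderivcont : ContinuousOn (fderiv ℝ f) (f ⁻¹' {0})ᶜ :=
    hC1.continuousOn_fderiv_of_isOpen hZcopen le_rfl
  have hgradcont : ContinuousOn (fun x => gradient f x) (f ⁻¹' {0})ᶜ := by
    exact (InnerProductSpace.toDual ℝ
      (EuclideanSpace ℝ (Fin n))).symm.continuous.comp_continuousOn hfderivcont
  have hgnorm : ContinuousOn (fun x => ‖gradient f x‖) (f ⁻¹' {0})ᶜ :=
    continuous_norm.comp_continuousOn hgradcont
  set S : ℝ → Set ℝ := fun t => {y | ∃ x ∈ K, f x = t ∧ y = ‖gradient f x‖} with hSdef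
  set m : ℝ → ℝ := fun t => sInf (insert 1 (S t)) with hmdef
  have hSbdd : ∀ t, BddBelow (insert (1:ℝ) (S t)) := by
    intro t
    refine ⟨0, ?_⟩
    rintro y (rfl | ⟨x, hx, hfx, rfl⟩)
    · norm_num
    · exact norm_nonneg _
  have hm1 : ∀ t, m t ≤ 1 := fun t => csInf_le (hSbdd t) (mem_insert _ _)
  have hm0 : ∀ t, 0 ≤ m t := by
    intro t
    apply le_csInf (insert_nonempty _ _)
    rintro y (rfl | ⟨x, hx, hfx, rfl⟩)
    · norm_num
    · exact norm_nonneg _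
  have hm_le : ∀ x ∈ K, m (f x) ≤ ‖gradient f x‖ := fun x hx =>
    csInf_le (hSbdd _) (mem_insert_of_mem _ ⟨x, hx, rfl, rfl⟩)
  have hgradp : gradient f p = 0 := by
    have hfd : fderiv ℝ f p = 0 := by
      by_cases hdiff : DifferentiableAt ℝ f p
      · apply IsLocalMin.fderiv_eq_zero
        apply Filter.Eventually.of_forall
        intro x
        rw [hfp]
        exact hf0 x
      · exact fderiv_zero_of_not_differentiableAt hdiff
    show (InnerProductSpace.toDual ℝ (EuclideanSpace ℝ (Fin n))).symm (fderiv ℝ f p) = 0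
    rw [hfd]
    simp
  have hm00 : m 0 = 0 := by
    apply le_antisymm _ (hm0 0)
    apply csInf_le (hSbdd 0)
    apply mem_insert_of_mem
    exact ⟨p, hpK, hfp, by rw [hgradp]; simp⟩
  have hfibercompact : ∀ t : ℝ, IsCompact (K ∩ f ⁻¹' {t}) := fun t =>
    hK.inter_right (isClosed_singleton.preimage hf)
  have hfibersub : ∀ t : ℝ, t ≠ 0 → (K ∩ f ⁻¹' {t}) ⊆ (f ⁻¹' {0})ᶜ := by
    intro t ht x hx
    simp only [mem_compl_iff, mem_preimage, mem_singleton_iff]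
    rw [show f x = t from hx.2]
    exact ht
  have hSempty : ∀ t : ℝ, (K ∩ f ⁻¹' {t}) = ∅ → S t = ∅ := by
    intro t hemp
    rw [eq_empty_iff_forall_notMem]
    rintro y ⟨x, hx, hfx, rfl⟩
    rw [eq_empty_iff_forall_notMem] at hemp
    exact hemp x ⟨hx, by simp [hfx]⟩
  have hmin : ∀ t : ℝ, 0 < t → (K ∩ f ⁻¹' {t}).Nonempty →
      ∃ x₀ ∈ K ∩ f ⁻¹' {t}, 0 < ‖gradient f x₀‖ ∧
        ∀ x ∈ K ∩ f ⁻¹' {t}, ‖gradient f x₀‖ ≤ ‖gradient f x‖ := by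
    intro t ht hne
    obtain ⟨x₀, hx₀, hmin0⟩ :=
      (hfibercompact t).exists_isMinOn hne (hgnorm.mono (hfibersub t ht.ne'))
    refine ⟨x₀, hx₀, ?_, fun x hx => hmin0 hx⟩
    rw [norm_pos_iff]
    apply hsimple x₀ (hKsub hx₀.1)
    rw [show f x₀ = t from hx₀.2]
    exact ht.ne'
  have hmin_le_m : ∀ t : ℝ, ∀ x₀ ∈ K ∩ f ⁻¹' {t},
      (∀ x ∈ K ∩ f ⁻¹' {t}, ‖gradient f x₀‖ ≤ ‖gradient f x‖) →
      min ‖gradient f x₀‖ 1 ≤ m t := by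
    intro t x₀ hx₀ hminprop
    apply le_csInf (insert_nonempty _ _)
    rintro y (rfl | ⟨x, hx, hfx, rfl⟩)
    · exact min_le_right _ _
    · exact le_trans (min_le_left _ _) (hminprop x ⟨hx, by simp [hfx]⟩)
  have hmpos : ∀ t : ℝ, 0 < t → 0 < m t := by
    intro t ht
    rcases eq_empty_or_nonempty (K ∩ f ⁻¹' {t}) with hemp | hne
    · rw [hmdef]
      simp only [hSempty t hemp, insert_empty_eq]
      rw [csInf_singleton]
      norm_num
    · obtain ⟨x₀, hx₀, hx₀pos, hx₀min⟩ := hmin t ht hne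
      exact lt_of_lt_of_le (lt_min hx₀pos one_pos) (hmin_le_m t x₀ hx₀ hx₀min)
  have hlsc : LowerSemicontinuous m := by
    intro t y hy
    rcases lt_trichotomy t 0 with htneg | rfl | htpos
    · have hm_eq : ∀ s : ℝ, s < 0 → m s = 1 := by
        intro s hs
        have hS : S s = ∅ := by
          rw [eq_empty_iff_forall_notMem]
          rintro y ⟨x, hx, hfx, rfl⟩
          exact absurd (hfx ▸ hf0 x) (not_le.2 hs)
        rw [hmdef]
        simp only [hS, insert_empty_eq]
        exact csInf_singleton 1
      have hy1 : y < 1 := by rwa [hm_eq t htneg] at hy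
      filter_upwards [eventually_lt_nhds htneg] with s hs
      rw [hm_eq s hs]
      exact hy1
    · rw [hm00] at hy
      apply Filter.Eventually.of_forall
      intro s
      exact lt_of_lt_of_le hy (hm0 s)
    · by_contra hcon
      have hfreq : ∃ᶠ s in nhds t, m s ≤ y := by
        rw [Filter.not_eventually] at hcon
        apply hcon.mono
        intro s
        exact not_lt.1
      obtain ⟨u, hu_t, hu⟩ := Filter.exists_seq_forall_of_frequently hfreq
      set y' : ℝ := (y + m t) / 2 with hy'def
      have hyy' : y < y' := by rw [hy'def]; linarith
      have hy'm : y' < m t := by rw [hy'def]; linarith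
      have hx : ∀ k : ℕ, ∃ x, x ∈ K ∧ f x = u k ∧ ‖gradient f x‖ < y' := by
        intro k
        have h1 : sInf (insert 1 (S (u k))) < y' := lt_of_le_of_lt (hu k) hyy'
        obtain ⟨z, hz, hzlt⟩ := exists_lt_of_csInf_lt (insert_nonempty _ _) h1
        rcases hz with rfl | ⟨x, hxK, hfx, rfl⟩
        · exact absurd (lt_trans hzlt hy'm) (not_lt.2 (hm1 t))
        · exact ⟨x, hxK, hfx, hzlt⟩
      choose x hxK hxf hxg using hx
      obtain ⟨xi, hxiK, φs, hφmono, hφtend⟩ := hK.tendsto_subseq hxK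
      have hfxi : f xi = t := by
        have h1 : Filter.Tendsto (fun k => f (x (φs k))) Filter.atTop (nhds (f xi)) :=
          (hf.tendsto xi).comp hφtend
        have heq : (fun k => f (x (φs k))) = fun k => u (φs k) := funext fun k => hxf _
        rw [heq] at h1
        have h2 : Filter.Tendsto (fun k => u (φs k)) Filter.atTop (nhds t) :=
          hu_t.comp (hφmono.tendsto_atTop)
        exact tendsto_nhds_unique h1 h2
      have hxiZc : xi ∈ (f ⁻¹' {0})ᶜ := by
        simp only [mem_compl_iff, mem_preimage, mem_singleton_iff]
        rw [hfxi]
        exact htpos.ne'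
      have hcont : ContinuousAt (fun x => ‖gradient f x‖) xi :=
        hgnorm.continuousAt (hZcopen.mem_nhds hxiZc)
      have hlim : Filter.Tendsto (fun k => ‖gradient f (x (φs k))‖) Filter.atTop
          (nhds ‖gradient f xi‖) := hcont.tendsto.comp hφtend
      have hle : ‖gradient f xi‖ ≤ y' := le_of_tendsto' hlim (fun k => (hxg (φs k)).le)
      have hge : m t ≤ ‖gradient f xi‖ := by
        have := hm_le xi hxiK
        rwa [hfxi] at this
      linarith
  have halpha : ∀ t ∈ Ioo (0:ℝ) ρ, (m t)⁻¹ ≤ alphaK f K t + 1 := by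
    intro t ht
    rcases eq_empty_or_nonempty (K ∩ f ⁻¹' {t}) with hemp | hne
    · have hA : {y : ℝ | ∃ x ∈ K, f x = t ∧ y = ‖gradient f x‖⁻¹} = ∅ := by
        rw [eq_empty_iff_forall_notMem]
        rintro y ⟨x, hx, hfx, rfl⟩
        rw [eq_empty_iff_forall_notMem] at hemp
        exact hemp x ⟨hx, by simp [hfx]⟩
      have hm_eq : m t = 1 := by
        rw [hmdef]
        simp only [hSempty t hemp, insert_empty_eq]
        exact csInf_singleton 1
      rw [alphaK, hA, Real.sSup_empty, hm_eq]
      norm_num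
    · obtain ⟨x₀, hx₀, hx₀pos, hx₀min⟩ := hmin t ht.1 hne
      have h1 : (m t)⁻¹ ≤ (min ‖gradient f x₀‖ 1)⁻¹ :=
        inv_anti₀ (lt_min hx₀pos one_pos) (hmin_le_m t x₀ hx₀ hx₀min)
      have h2 : (min ‖gradient f x₀‖ 1)⁻¹ ≤ ‖gradient f x₀‖⁻¹ + 1 := by
        rcases le_total ‖gradient f x₀‖ 1 with hc | hc
        · rw [min_eq_left hc]
          linarith [inv_nonneg.2 (norm_nonneg (gradient f x₀))]
        · rw [min_eq_right hc, inv_one]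
          linarith [inv_nonneg.2 (norm_nonneg (gradient f x₀))]
      have h3 : ‖gradient f x₀‖⁻¹ ≤ alphaK f K t := by
        apply le_csSup
        · refine ⟨‖gradient f x₀‖⁻¹, ?_⟩
          rintro y ⟨x, hx, hfx, rfl⟩
          exact inv_anti₀ hx₀pos (hx₀min x ⟨hx, by simp [hfx]⟩)
        · exact ⟨x₀, hx₀.1, hx₀.2, rfl⟩
      linarith
  have hIfin : ∫⁻ t in Ioo (0:ℝ) ρ, ENNReal.ofReal (m t)⁻¹ ≠ ∞ := by
    have hmono : ∀ t ∈ Ioo (0:ℝ) ρ,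
        ENNReal.ofReal (m t)⁻¹ ≤ (‖alphaK f K t‖₊ : ℝ≥0∞) + 1 := by
      intro t ht
      calc ENNReal.ofReal (m t)⁻¹ ≤ ENNReal.ofReal (alphaK f K t + 1) :=
            ENNReal.ofReal_le_ofReal (halpha t ht)
        _ ≤ ENNReal.ofReal (alphaK f K t) + ENNReal.ofReal 1 := ENNReal.ofReal_add_le
        _ ≤ (‖alphaK f K t‖₊ : ℝ≥0∞) + 1 := by
            apply add_le_add (Real.ofReal_le_enorm _)
            simp
    have hle : ∫⁻ t in Ioo (0:ℝ) ρ, ENNReal.ofReal (m t)⁻¹ ≤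
        ∫⁻ t in Ioo (0:ℝ) ρ, ((‖alphaK f K t‖₊ : ℝ≥0∞) + 1) := by
      apply lintegral_mono_ae
      rw [ae_restrict_iff' measurableSet_Ioo]
      exact ae_of_all _ hmono
    apply ne_top_of_le_ne_top _ hle
    rw [lintegral_add_right _ measurable_const]
    apply ENNReal.add_ne_top.2
    constructor
    · exact hint.2.ne
    · simp [Real.volume_Ioo]
  obtain ⟨a, hacont, hapos, haint, ham⟩ :=
    core_exists_a m ρ hρ hm0 hm1 hm00 hmpos hlsc hIfin
  refine ⟨interior K, isOpen_interior, mem_interior_iff_mem_nhds.2 hKnhds,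
    ρ, hρ, a, hacont, hapos, haint, ?_⟩
  intro x hxU hfx1 hfx2
  calc a (f x) ≤ m (f x) := ham _ ⟨hfx1, hfx2⟩
    _ ≤ ‖gradient f x‖ := hm_le x (interior_subset hxU)
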